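/- Let N be a von Neumann algebra with predual N_*. Suppose σ ∈ N_* with ‖σ‖ ≤ 1, r and l are projections in N, and β ∈ (0,1) are such that |σ|(r) ≥ 1−β and |σ*|(l) ≥ 1−β. Then ‖σ − τ‖ < 5√β, where τ = (l·σ·r)/‖l·σ·r‖ and (l·σ·r)(x) = σ(rxl). -/

import Mathlib

open scoped ComplexOrder

section CS
variable {N : Type*} [CStarAlgebra N] (φ : N →L[ℂ] ℂ)

lemma diag_re_im (hφ : ∀ x : N, 0 ≤ φ (star x * x)) (x : N) :
    0 ≤ (φ (star x * x)).re ∧ (φ (star x * x)).im = 0 := by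
  have h := hφ x
  rw [Complex.le_def] at h
  exact ⟨by simpa using h.1, by simpa using h.2.symm⟩

lemma herm (hφ : ∀ x : N, 0 ≤ φ (star x * x)) (x y : N) :
    φ (star y * x) = starRingEnd ℂ (φ (star x * y)) := by
  have him : ∀ z : N, (φ (star z * z)).im = 0 := fun z => (diag_re_im φ hφ z).2
  have key1 : ∀ a b : N, (φ (star a * b) + φ (star b * a)).im = 0 := by
    intro a b
    have h := him (a + b)
    have hexp : star (a + b) * (a + b)
        = star a * a + (star a * b + star b * a) + star b * b := by
      simp only [star_add]; noncomm_ring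
    rw [hexp, map_add, map_add, map_add] at h
    simpa [Complex.add_im, him a, him b] using h
  have key2 : (φ (star x * y)).re - (φ (star y * x)).re = 0 := by
    have h := key1 x ((Complex.I : ℂ) • y)
    have e1 : star x * ((Complex.I : ℂ) • y) = (Complex.I : ℂ) • (star x * y) := by
      rw [mul_smul_comm]
    have e2 : star ((Complex.I : ℂ) • y) * x = (-Complex.I : ℂ) • (star y * x) := by
      rw [star_smul, smul_mul_assoc]
      simp [Complex.conj_I]
    rw [e1, e2, map_smul, map_smul] at h
    simp only [smul_eq_mul, Complex.add_im, Complex.mul_im, Complex.I_re, Complex.I_im,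
      Complex.neg_re, Complex.neg_im] at h
    linarith
  have key1' := key1 x y
  simp only [Complex.add_im] at key1'
  apply Complex.ext
  · simp only [Complex.conj_re]; linarith
  · simp only [Complex.conj_im]; linarith

lemma cauchy_schwarz (hφ : ∀ x : N, 0 ≤ φ (star x * x)) (a b : N) :
    ‖φ (star a * b)‖ ^ 2 ≤ (φ (star a * a)).re * (φ (star b * b)).re := by
  set c := φ (star a * b) with hc
  by_cases h0 : c = 0
  · rw [h0]
    simpa using mul_nonneg (diag_re_im φ hφ a).1 (diag_re_im φ hφ b).1
  · set a' := c • a with ha'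
    set n := Complex.normSq c with hn
    have hnpos : 0 < n := Complex.normSq_pos.2 h0
    have h1 : φ (star a' * a') = (n : ℂ) * φ (star a * a) := by
      rw [ha', star_smul, smul_mul_assoc, mul_smul_comm, smul_smul, map_smul, smul_eq_mul,
        Complex.star_def, ← Complex.normSq_eq_conj_mul_self]
    have h2 : φ (star a' * b) = (n : ℂ) := by
      rw [ha', star_smul, smul_mul_assoc, map_smul, smul_eq_mul, ← hc,
        Complex.star_def, ← Complex.normSq_eq_conj_mul_self]
    have h3 : φ (star b * a') = (n : ℂ) := by
      rw [herm φ hφ, h2]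
      simp
    have expand : ∀ s : ℝ, star ((s:ℂ) • a' + b) * ((s:ℂ) • a' + b)
        = ((s:ℂ)*(s:ℂ)) • (star a' * a') + ((s:ℂ) • (star a' * b)
          + ((s:ℂ) • (star b * a') + star b * b)) := by
      intro s
      simp only [star_add, star_smul, Complex.star_def, Complex.conj_ofReal, add_mul,
        mul_add, smul_mul_assoc, mul_smul_comm, smul_smul, smul_add]
      abel
    have hE : ∀ s : ℝ, 0 ≤ (n * (φ (star a * a)).re) * (s * s)
        + (2 * n) * s + (φ (star b * b)).re := by
      intro s
      have h := (diag_re_im φ hφ ((s:ℂ) • a' + b)).1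
      rw [expand s, map_add, map_add, map_add, map_smul, map_smul, map_smul,
        h1, h2, h3] at h
      simp only [smul_eq_mul, Complex.add_re, Complex.mul_re, Complex.ofReal_re,
        Complex.ofReal_im, Complex.mul_im, zero_mul, mul_zero, sub_zero, add_zero,
        zero_add, zero_sub, neg_zero] at h
      nlinarith [h]
    have hd := discrim_le_zero hE
    rw [discrim] at hd
    have hcn : ‖c‖ ^ 2 = n := by simp [hn, Complex.normSq_eq_norm_sq]
    rw [hcn]
    nlinarith [hd, hnpos]

end CS

section helpers
variable {N : Type*} [CStarAlgebra N]

lemma proj_norm_le_one {p : N} (hp : IsSelfAdjoint p) (hpp : p * p = p) : ‖p‖ ≤ 1 := by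
  have h : ‖p‖ * ‖p‖ = ‖p‖ := by
    conv_rhs => rw [← hpp]
    rw [← CStarRing.norm_star_mul_self, hp.star_eq]
  nlinarith [norm_nonneg p]

lemma partial_isometry_norm_le_one {u : N} (hu : u * star u * u = u) : ‖u‖ ≤ 1 := by
  set q := star u * u with hq
  have hqq : q * q = q := by
    rw [hq]
    calc star u * u * (star u * u) = star u * (u * star u * u) := by noncomm_ring
    _ = star u * u := by rw [hu]
  have hqsa : IsSelfAdjoint q := by
    rw [hq]; exact IsSelfAdjoint.star_mul_self u
  have h1 : ‖q‖ ≤ 1 := proj_norm_le_one hqsa hqq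
  have h2 : ‖u‖ * ‖u‖ = ‖q‖ := (CStarRing.norm_star_mul_self).symm
  nlinarith [norm_nonneg u]

end helpers

lemma sq_le_imp {A B : ℝ} (hA : 0 ≤ A) (hB : 0 ≤ B) (h : A ^ 2 ≤ B ^ 2) : A ≤ B := by
  nlinarith

/-- `(l · σ · r) x = σ (r * x * l)`. -/
noncomputable def twoSidedFunctional {N : Type*} [CStarAlgebra N]
    (σ : N →L[ℂ] ℂ) (r l : N) : N →L[ℂ] ℂ :=
  σ.comp ((((ContinuousLinearMap.mul ℂ N).flip l).comp (ContinuousLinearMap.mul ℂ N r)))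

set_option maxHeartbeats 1000000 in
set_option synthInstance.maxHeartbeats 1000000 in
/-- Let `N` be a von Neumann algebra (modelled as a unital C*-algebra in which the
polar decompositions `σ = u |σ|`, `σ* = u* |σ*|` of a normal functional `σ` are
realized by a partial isometry `u ∈ N`).  If `‖σ‖ ≤ 1`, `r, l` are projections with
`|σ|(r) ≥ 1 - β` and `|σ*|(l) ≥ 1 - β`, `0 < β < 1`, then `‖σ - τ‖ < 5√β` where
`τ = l·σ·r / ‖l·σ·r‖`. -/
theorem norm_sub_normalized_compression_lt
    {N : Type*} [CStarAlgebra N]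
    (σ σstar absσ absσstar : N →L[ℂ] ℂ) (u : N)
    (hσstar : ∀ x, σstar x = starRingEnd ℂ (σ (star x)))
    (hu : u * star u * u = u)
    (habspos : ∀ x : N, 0 ≤ absσ (star x * x)) (habsnorm : ‖absσ‖ = ‖σ‖)
    (hpolar : ∀ x, σ x = absσ (x * u)) (habs : ∀ x, absσ x = σ (x * star u))
    (habsstarpos : ∀ x : N, 0 ≤ absσstar (star x * x)) (habsstarnorm : ‖absσstar‖ = ‖σ‖)
    (hpolarstar : ∀ x, σstar x = absσstar (x * star u))
    (habsstar : ∀ x, absσstar x = σstar (x * u))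
    (hσ : ‖σ‖ ≤ 1)
    (r l : N) (hr : IsSelfAdjoint r ∧ r * r = r) (hl : IsSelfAdjoint l ∧ l * l = l)
    (β : ℝ) (hβ : 0 < β ∧ β < 1)
    (hrσ : (1 - β : ℝ) ≤ (absσ r).re) (hlσ : (1 - β : ℝ) ≤ (absσstar l).re) :
    ‖σ - ‖twoSidedFunctional σ r l‖⁻¹ • twoSidedFunctional σ r l‖ <
      5 * Real.sqrt β := by
  obtain ⟨hβ0, hβ1⟩ := hβ
  obtain ⟨hrsa, hrr⟩ := hr
  obtain ⟨hlsa, hll⟩ := hl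
  set s := Real.sqrt β with hs
  have hs0 : 0 < s := Real.sqrt_pos.2 hβ0
  have hs2 : s ^ 2 = β := Real.sq_sqrt hβ0.le
  have hβs : β < s := by nlinarith
  -- nontriviality
  by_cases hone : (1 : N) = 0
  · exfalso
    have hrz : r = 0 := by rw [← mul_one r, hone, mul_zero]
    rw [hrz, map_zero] at hrσ
    simp only [Complex.zero_re] at hrσ
    linarith
  have hNT : Nontrivial N := nontrivial_of_ne 1 0 hone
  have hnorm1 : ‖(1 : N)‖ = 1 := norm_one
  have hu1 : ‖u‖ ≤ 1 := partial_isometry_norm_le_one hu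
  have hr1 : ‖r‖ ≤ 1 := proj_norm_le_one hrsa hrr
  have hl1 : ‖l‖ ≤ 1 := proj_norm_le_one hlsa hll
  have re_le_norm : ∀ z : ℂ, z.re ≤ ‖z‖ := fun z => by
    exact Complex.re_le_norm z
  have habs1 : (absσ 1).re ≤ ‖σ‖ := by
    calc (absσ 1).re ≤ ‖absσ 1‖ := re_le_norm _
      _ ≤ ‖absσ‖ * ‖(1 : N)‖ := absσ.le_opNorm 1
      _ = ‖σ‖ := by rw [habsnorm, hnorm1, mul_one]
  have habsstar1 : (absσstar 1).re ≤ ‖σ‖ := by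
    calc (absσstar 1).re ≤ ‖absσstar 1‖ := re_le_norm _
      _ ≤ ‖absσstar‖ * ‖(1 : N)‖ := absσstar.le_opNorm 1
      _ = ‖σ‖ := by rw [habsstarnorm, hnorm1, mul_one]
  -- first term bound
  have key1 : ∀ x : N, ‖σ ((1 - r) * x)‖ ≤ s * ‖x‖ := by
    intro x
    have hrw : σ ((1 - r) * x) = absσ (star (1 - r) * (x * u)) := by
      rw [hpolar, (IsSelfAdjoint.one N).sub hrsa |>.star_eq, mul_assoc]
    have hcs := cauchy_schwarz absσ habspos (1 - r) (x * u)
    have hproj : star (1 - r) * (1 - r) = 1 - r := by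
      rw [(IsSelfAdjoint.one N).sub hrsa |>.star_eq, sub_mul, one_mul, mul_sub, mul_one, hrr]
      abel
    have h1 : (absσ (star (1 - r) * (1 - r))).re ≤ β := by
      rw [hproj, map_sub, Complex.sub_re]
      linarith
    have h2 : (absσ (star (x * u) * (x * u))).re ≤ ‖x‖ ^ 2 := by
      calc (absσ (star (x * u) * (x * u))).re ≤ ‖absσ (star (x * u) * (x * u))‖ :=
            re_le_norm _
        _ ≤ ‖absσ‖ * ‖star (x * u) * (x * u)‖ := absσ.le_opNorm _
        _ = ‖σ‖ * (‖x * u‖ * ‖x * u‖) := by rw [habsnorm, CStarRing.norm_star_mul_self]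
        _ ≤ ‖x‖ ^ 2 := by
            have hxu : ‖x * u‖ ≤ ‖x‖ := by
              calc ‖x * u‖ ≤ ‖x‖ * ‖u‖ := norm_mul_le x u
                _ ≤ ‖x‖ * 1 := by
                    exact mul_le_mul_of_nonneg_left hu1 (norm_nonneg x)
                _ = ‖x‖ := mul_one _
            nlinarith [norm_nonneg (x * u), norm_nonneg x, hσ, (norm_nonneg σ)]
    rw [hrw]
    apply sq_le_imp (norm_nonneg _) (by positivity)
    calc ‖absσ (star (1 - r) * (x * u))‖ ^ 2
        ≤ (absσ (star (1 - r) * (1 - r))).re * (absσ (star (x * u) * (x * u))).re := hcs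
      _ ≤ β * ‖x‖ ^ 2 := by
          apply mul_le_mul h1 h2 (diag_re_im absσ habspos (x * u)).1 hβ0.le
      _ = (s * ‖x‖) ^ 2 := by rw [mul_pow, hs2]
  -- second term bound
  have hσconj : ∀ y : N, σ y = starRingEnd ℂ (σstar (star y)) := by
    intro y
    rw [hσstar (star y), star_star, Complex.conj_conj]
  have hlstar : star (1 - l) = 1 - l := ((IsSelfAdjoint.one N).sub hlsa).star_eq
  have key2 : ∀ x : N, ‖σ (r * x * (1 - l))‖ ≤ s * ‖x‖ := by
    intro x
    have hrw : ‖σ (r * x * (1 - l))‖ = ‖absσstar (star (1 - l) * (star x * r * star u))‖ := by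
      rw [hσconj, RCLike.norm_conj, hpolarstar]
      congr 2
      simp only [star_mul, hlsa.star_eq, hrsa.star_eq, hlstar, mul_assoc]
    have hcs := cauchy_schwarz absσstar habsstarpos (1 - l) (star x * r * star u)
    have hproj : star (1 - l) * (1 - l) = 1 - l := by
      rw [hlstar, sub_mul, one_mul, mul_sub, mul_one, hll]
      abel
    have h1 : (absσstar (star (1 - l) * (1 - l))).re ≤ β := by
      rw [hproj, map_sub, Complex.sub_re]
      linarith
    set b := star x * r * star u with hb
    have hbnorm : ‖b‖ ≤ ‖x‖ := by
      calc ‖b‖ ≤ ‖star x * r‖ * ‖star u‖ := norm_mul_le _ _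
        _ ≤ ‖star x‖ * ‖r‖ * ‖star u‖ := by
            exact mul_le_mul_of_nonneg_right (norm_mul_le _ _) (norm_nonneg _)
        _ ≤ ‖x‖ := by
            rw [norm_star, norm_star]
            nlinarith [norm_nonneg x, norm_nonneg r, norm_nonneg u, hr1, hu1,
              mul_nonneg (norm_nonneg x) (norm_nonneg r),
              mul_le_mul_of_nonneg_left hr1 (norm_nonneg x)]
    have h2 : (absσstar (star b * b)).re ≤ ‖x‖ ^ 2 := by
      calc (absσstar (star b * b)).re ≤ ‖absσstar (star b * b)‖ := re_le_norm _
        _ ≤ ‖absσstar‖ * ‖star b * b‖ := absσstar.le_opNorm _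
        _ = ‖σ‖ * (‖b‖ * ‖b‖) := by rw [habsstarnorm, CStarRing.norm_star_mul_self]
        _ ≤ ‖x‖ ^ 2 := by nlinarith [norm_nonneg b, norm_nonneg x, norm_nonneg σ]
    rw [hrw]
    apply sq_le_imp (norm_nonneg _) (by positivity)
    calc ‖absσstar (star (1 - l) * b)‖ ^ 2
        ≤ (absσstar (star (1 - l) * (1 - l))).re * (absσstar (star b * b)).re := hcs
      _ ≤ β * ‖x‖ ^ 2 := by
          apply mul_le_mul h1 h2 (diag_re_im absσstar habsstarpos b).1 hβ0.le
      _ = (s * ‖x‖) ^ 2 := by rw [mul_pow, hs2]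
  -- distance from σ to the compression
  set T := twoSidedFunctional σ r l with hT
  have hTapp : ∀ x : N, T x = σ (r * x * l) := by
    intro x
    simp [hT, twoSidedFunctional]
  have hTle : ‖σ - T‖ ≤ 2 * s := by
    apply ContinuousLinearMap.opNorm_le_bound _ (by positivity)
    intro x
    have hdecomp : x - r * x * l = (1 - r) * x + r * x * (1 - l) := by noncomm_ring
    have : (σ - T) x = σ ((1 - r) * x) + σ (r * x * (1 - l)) := by
      rw [ContinuousLinearMap.sub_apply, hTapp, ← map_sub, hdecomp, map_add]
    rw [this]
    calc ‖σ ((1 - r) * x) + σ (r * x * (1 - l))‖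
        ≤ ‖σ ((1 - r) * x)‖ + ‖σ (r * x * (1 - l))‖ := norm_add_le _ _
      _ ≤ s * ‖x‖ + s * ‖x‖ := add_le_add (key1 x) (key2 x)
      _ = 2 * s * ‖x‖ := by ring
  have hσlow : 1 - β ≤ ‖σ‖ := by
    calc (1 - β : ℝ) ≤ (absσ r).re := hrσ
      _ ≤ ‖absσ r‖ := re_le_norm _
      _ ≤ ‖absσ‖ * ‖r‖ := absσ.le_opNorm r
      _ ≤ ‖σ‖ := by rw [habsnorm]; nlinarith [norm_nonneg σ]
  by_cases hc : ‖T‖ = 0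
  · have hT0 : T = 0 := (ContinuousLinearMap.opNorm_zero_iff T).1 hc
    have hz : ‖T‖⁻¹ • T = 0 := by rw [hT0]; ext x; simp
    rw [hz, sub_zero]
    have hσT : ‖σ‖ = ‖σ - T‖ := by rw [hT0, sub_zero]
    rw [hσT]
    calc ‖σ - T‖ ≤ 2 * s := hTle
      _ < 5 * s := by linarith
  · have hcpos : 0 < ‖T‖ := (norm_nonneg T).lt_of_ne (Ne.symm hc)
    have htri : ‖σ - ‖T‖⁻¹ • T‖ ≤ ‖σ - T‖ + ‖T - ‖T‖⁻¹ • T‖ := by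
      have heq : σ - ‖T‖⁻¹ • T = (σ - T) + (T - ‖T‖⁻¹ • T) := by abel
      rw [heq]
      exact norm_add_le _ _
    have h2nd : ‖T - ‖T‖⁻¹ • T‖ ≤ |‖T‖ - 1| := by
      apply ContinuousLinearMap.opNorm_le_bound _ (abs_nonneg _)
      intro x
      rw [ContinuousLinearMap.sub_apply, ContinuousLinearMap.smul_apply]
      have hx : T x - ‖T‖⁻¹ • T x = (1 - ‖T‖⁻¹) • T x := by module
      rw [hx, norm_smul, Real.norm_eq_abs]
      calc |1 - ‖T‖⁻¹| * ‖T x‖ ≤ |1 - ‖T‖⁻¹| * (‖T‖ * ‖x‖) :=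
            mul_le_mul_of_nonneg_left (T.le_opNorm x) (abs_nonneg _)
        _ = |‖T‖ - 1| * ‖x‖ := by
            rw [← mul_assoc]
            congr 1
            rw [← abs_of_pos hcpos, ← abs_mul]
            congr 1
            field_simp
            rw [abs_of_pos hcpos]; ring
    have hTnear : |‖T‖ - 1| ≤ 2 * s + β := by
      have h1 : |‖T‖ - ‖σ‖| ≤ ‖σ - T‖ := by
        rw [norm_sub_rev]
        exact abs_norm_sub_norm_le T σ
      have h2 : |‖σ‖ - 1| ≤ β := by
        rw [abs_le]
        constructor <;> linarith
      calc |‖T‖ - 1| ≤ |‖T‖ - ‖σ‖| + |‖σ‖ - 1| := by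
            have := abs_sub_le (‖T‖) (‖σ‖) 1
            linarith
        _ ≤ 2 * s + β := add_le_add (le_trans h1 hTle) h2
    calc ‖σ - ‖T‖⁻¹ • T‖ ≤ ‖σ - T‖ + ‖T - ‖T‖⁻¹ • T‖ := htri
      _ ≤ 2 * s + (2 * s + β) := add_le_add hTle (le_trans h2nd hTnear)
      _ < 5 * s := by linarith
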